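/- Let c be a cost vector of nonnegative reals, let t ≥ 1 be an integer, and let G be a simple graph. Let V₀ and V₁ be sets of pairwise clones in G such that V₀ ∪ V₁ is an independent set of G and V₀, V₁ are disjoint. Then θ*_t(G, c) ≤ max{ θ*_t(G(V₀→V₁), c), θ*_t(G(V₁→V₀), c) }. -/

import Mathlib

open scoped Classical
open Finset

/-- `K` is a clique of `G`: a nonempty set of pairwise adjacent vertices. -/
def IsCliqueOf {V : Type} [Fintype V] [DecidableEq V] (G : SimpleGraph V) (K : Finset V) : Prop :=
  K.Nonempty ∧ G.IsClique (K : Set V)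

/-- Total `c`-cost of a weighting `f` of the finsets of vertices. -/
noncomputable def cliqueCost {V : Type} [Fintype V] [DecidableEq V]
    (c : ℕ → ℝ) (f : Finset V → ℝ) : ℝ :=
  ∑ K : Finset V, c K.card * f K

/-- `f` is a fractional `t`-clique cover of `G`. -/
def IsFracCover {V : Type} [Fintype V] [DecidableEq V]
    (t : ℕ) (G : SimpleGraph V) (f : Finset V → ℝ) : Prop :=
  (∀ K, 0 ≤ f K) ∧ (∀ K, ¬ IsCliqueOf G K → f K = 0) ∧
  ∀ T : Finset V, T.card = t → G.IsClique (T : Set V) →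
    1 ≤ ∑ K ∈ Finset.univ.filter (fun K => T ⊆ K), f K

/-- `f` is a fractional `t`-clique decomposition of `G`. -/
def IsFracDecomp {V : Type} [Fintype V] [DecidableEq V]
    (t : ℕ) (G : SimpleGraph V) (f : Finset V → ℝ) : Prop :=
  (∀ K, 0 ≤ f K) ∧ (∀ K, ¬ IsCliqueOf G K → f K = 0) ∧
  ∀ T : Finset V, T.card = t → G.IsClique (T : Set V) →
    ∑ K ∈ Finset.univ.filter (fun K => T ⊆ K), f K = 1

/-- `f` is an integer (`{0,1}`-valued) `t`-clique cover of `G`. -/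
def IsIntCover {V : Type} [Fintype V] [DecidableEq V]
    (t : ℕ) (G : SimpleGraph V) (f : Finset V → ℝ) : Prop :=
  IsFracCover t G f ∧ ∀ K, f K = 0 ∨ f K = 1

/-- `f` is an integer (`{0,1}`-valued) `t`-clique decomposition of `G`. -/
def IsIntDecomp {V : Type} [Fintype V] [DecidableEq V]
    (t : ℕ) (G : SimpleGraph V) (f : Finset V → ℝ) : Prop :=
  IsFracDecomp t G f ∧ ∀ K, f K = 0 ∨ f K = 1

/-- θ*_t(G,c): minimum total c-cost of a fractional t-clique cover. -/
noncomputable def thetaFrac {V : Type} [Fintype V] [DecidableEq V]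
    (t : ℕ) (G : SimpleGraph V) (c : ℕ → ℝ) : ℝ :=
  sInf { x | ∃ f, IsFracCover t G f ∧ x = cliqueCost c f }

/-- θ_t(G,c): minimum total c-cost of an integer t-clique cover. -/
noncomputable def thetaInt {V : Type} [Fintype V] [DecidableEq V]
    (t : ℕ) (G : SimpleGraph V) (c : ℕ → ℝ) : ℝ :=
  sInf { x | ∃ f, IsIntCover t G f ∧ x = cliqueCost c f }

/-- π*_t(G,c): minimum total c-cost of a fractional t-clique decomposition. -/
noncomputable def piFrac {V : Type} [Fintype V] [DecidableEq V]
    (t : ℕ) (G : SimpleGraph V) (c : ℕ → ℝ) : ℝ :=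
  sInf { x | ∃ f, IsFracDecomp t G f ∧ x = cliqueCost c f }

/-- π_t(G,c): minimum total c-cost of an integer t-clique decomposition. -/
noncomputable def piInt {V : Type} [Fintype V] [DecidableEq V]
    (t : ℕ) (G : SimpleGraph V) (c : ℕ → ℝ) : ℝ :=
  sInf { x | ∃ f, IsIntDecomp t G f ∧ x = cliqueCost c f }

/-- `G` is complete multipartite: vertices can be assigned to parts so that
adjacency holds exactly between distinct parts. -/
def IsCompleteMultipartite {V : Type} [Fintype V] [DecidableEq V]
    (G : SimpleGraph V) : Prop :=
  ∃ p : V → ℕ, ∀ u v, G.Adj u v ↔ p u ≠ p v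

/-- `U` is a (nonempty) set of pairwise clones: all vertices of `U` have the
same neighborhood in `G`. -/
def IsCloneSet {V : Type} [Fintype V] [DecidableEq V] (G : SimpleGraph V) (U : Set V) : Prop :=
  U.Nonempty ∧ ∀ u ∈ U, ∀ v ∈ U, G.neighborSet u = G.neighborSet v

/-- `G(V₀ → V₁)`: symmetrize `V₀` to `V₁`.  Edges inside the complement of
`V₀ ∪ V₁` are kept, and every vertex of `V₀ ∪ V₁` is joined exactly to the
common neighborhood of the vertices of `V₁`. -/
def symmetrize {V : Type} [Fintype V] [DecidableEq V]
    (G : SimpleGraph V) (V₀ V₁ : Set V) : SimpleGraph V where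
  Adj x y :=
    (x ∉ V₀ ∪ V₁ ∧ y ∉ V₀ ∪ V₁ ∧ G.Adj x y) ∨
    (x ∈ V₀ ∪ V₁ ∧ y ∉ V₀ ∪ V₁ ∧ ∃ z ∈ V₁, G.Adj z y) ∨
    (y ∈ V₀ ∪ V₁ ∧ x ∉ V₀ ∪ V₁ ∧ ∃ z ∈ V₁, G.Adj z x)
  symm := by
    constructor
    rintro x y (⟨hx, hy, h⟩ | ⟨hx, hy, h⟩ | ⟨hy, hx, h⟩)
    · exact Or.inl ⟨hy, hx, h.symm⟩
    · exact Or.inr (Or.inr ⟨hx, hy, h⟩)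
    · exact Or.inr (Or.inl ⟨hy, hx, h⟩)
  loopless := by
    constructor
    rintro x (⟨hx, hy, h⟩ | ⟨hx, hy, h⟩ | ⟨hy, hx, h⟩)
    · exact G.irrefl h
    · exact hy hx
    · exact hx hy

section AuxCombinatorics

variable {n : ℕ}

/-- Reindexing sums over finsets whose intersection with `D` is `{w}`. -/
lemma sum_reindex_insert (D : Finset (Fin n)) {w : Fin n} (hw : w ∈ D)
    (T : Finset (Fin n)) (F : Finset (Fin n) → ℝ) :
    ∑ K ∈ Finset.univ.filter (fun K => T ⊆ K ∧ K ∩ D = {w}), F K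
      = ∑ S ∈ Finset.univ.filter (fun S => T.erase w ⊆ S ∧ S ∩ D = ∅), F (insert w S) := by
  refine Finset.sum_nbij' (fun K => K.erase w) (fun S => insert w S) ?_ ?_ ?_ ?_ ?_
  · intro K hK
    simp only [Finset.mem_filter, Finset.mem_univ, true_and] at hK ⊢
    obtain ⟨hTK, hKD⟩ := hK
    refine ⟨Finset.erase_subset_erase _ hTK, ?_⟩
    ext x
    simp only [Finset.mem_inter, Finset.mem_erase, Finset.notMem_empty, iff_false, not_and]
    rintro ⟨hxw, hxK⟩ hxD
    have hx : x ∈ K ∩ D := Finset.mem_inter.2 ⟨hxK, hxD⟩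
    rw [hKD] at hx
    exact hxw (Finset.mem_singleton.1 hx)
  · intro S hS
    simp only [Finset.mem_filter, Finset.mem_univ, true_and] at hS ⊢
    obtain ⟨hTS, hSD⟩ := hS
    refine ⟨Finset.subset_insert_iff.2 hTS, ?_⟩
    rw [Finset.insert_inter_of_mem hw, hSD]
    rfl
  · intro K hK
    simp only [Finset.mem_filter, Finset.mem_univ, true_and] at hK
    have hwK : w ∈ K := by
      have : w ∈ K ∩ D := by rw [hK.2]; exact Finset.mem_singleton_self w
      exact (Finset.mem_inter.1 this).1
    exact Finset.insert_erase hwK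
  · intro S hS
    simp only [Finset.mem_filter, Finset.mem_univ, true_and] at hS
    refine Finset.erase_insert ?_
    intro hwS
    have : w ∈ S ∩ D := Finset.mem_inter.2 ⟨hwS, hw⟩
    rw [hS.2] at this
    exact absurd this (Finset.notMem_empty w)
  · intro K hK
    simp only [Finset.mem_filter, Finset.mem_univ, true_and] at hK
    have hwK : w ∈ K := by
      have : w ∈ K ∩ D := by rw [hK.2]; exact Finset.mem_singleton_self w
      exact (Finset.mem_inter.1 this).1
    rw [Finset.insert_erase hwK]

/-- Partition a sum over supersets of `T` according to the intersection with `D`,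
assuming the summand vanishes whenever the intersection has at least two elements. -/
lemma sum_partition (D : Finset (Fin n)) (T : Finset (Fin n)) (g : Finset (Fin n) → ℝ)
    (hg : ∀ K : Finset (Fin n), 1 < (K ∩ D).card → g K = 0) :
    ∑ K ∈ Finset.univ.filter (fun K => T ⊆ K), g K
      = (∑ K ∈ Finset.univ.filter (fun K => T ⊆ K ∧ K ∩ D = ∅), g K)
        + ∑ u ∈ D, ∑ K ∈ Finset.univ.filter (fun K => T ⊆ K ∧ K ∩ D = {u}), g K := by
  classical
  have hsplit := Finset.sum_filter_add_sum_filter_not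
    (Finset.univ.filter (fun K : Finset (Fin n) => T ⊆ K)) (fun K => K ∩ D = ∅) g
  rw [Finset.filter_filter, Finset.filter_filter] at hsplit
  rw [← hsplit]
  congr 1
  -- second part equals the biUnion sum
  have hpd : Set.PairwiseDisjoint (↑D)
      (fun u => Finset.univ.filter (fun K : Finset (Fin n) => T ⊆ K ∧ K ∩ D = {u})) := by
    intro u _ v _ huv
    refine Finset.disjoint_left.2 ?_
    intro K hKu hKv
    simp only [Finset.mem_filter] at hKu hKv
    apply huv
    have := hKu.2.2.symm.trans hKv.2.2
    exact Finset.singleton_injective this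
  rw [← Finset.sum_biUnion hpd]
  refine (Finset.sum_subset ?_ ?_).symm
  · intro K hK
    simp only [Finset.mem_biUnion, Finset.mem_filter, Finset.mem_univ, true_and] at hK ⊢
    obtain ⟨u, hu, hTK, hKD⟩ := hK
    refine ⟨hTK, ?_⟩
    rw [hKD]
    simp
  · intro K hK hKB
    simp only [Finset.mem_filter, Finset.mem_univ, true_and] at hK
    obtain ⟨hTK, hKD⟩ := hK
    by_cases hcard : 1 < (K ∩ D).card
    · exact hg K hcard
    · exfalso
      apply hKB
      obtain ⟨x, hx⟩ := Finset.nonempty_iff_ne_empty.2 hKD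
      have hsing : K ∩ D = {x} := by
        apply Finset.eq_singleton_iff_unique_mem.2
        refine ⟨hx, fun y hy => ?_⟩
        by_contra hne
        exact hcard (Finset.one_lt_card.2 ⟨y, hy, x, hx, hne⟩)
      simp only [Finset.mem_biUnion, Finset.mem_filter, Finset.mem_univ, true_and]
      exact ⟨x, (Finset.mem_inter.1 hx).2, hTK, hsing⟩

end AuxCombinatorics
section AuxGraph

variable {n : ℕ} {G : SimpleGraph (Fin n)} {A B : Set (Fin n)}

lemma symmetrize_adj_iff (x y : Fin n) :
    (symmetrize G A B).Adj x y ↔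
      (x ∉ A ∪ B ∧ y ∉ A ∪ B ∧ G.Adj x y) ∨
      (x ∈ A ∪ B ∧ y ∉ A ∪ B ∧ ∃ z ∈ B, G.Adj z y) ∨
      (y ∈ A ∪ B ∧ x ∉ A ∪ B ∧ ∃ z ∈ B, G.Adj z x) := Iff.rfl

lemma sym_not_adj {x y : Fin n} (hx : x ∈ A ∪ B) (hy : y ∈ A ∪ B) :
    ¬ (symmetrize G A B).Adj x y := by
  rw [symmetrize_adj_iff]
  rintro (⟨h, _, _⟩ | ⟨_, h, _⟩ | ⟨_, h, _⟩)
  · exact h hx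
  · exact h hy
  · exact h hx

lemma sym_adj_outside {x y : Fin n} (hx : x ∉ A ∪ B) (hy : y ∉ A ∪ B) :
    (symmetrize G A B).Adj x y ↔ G.Adj x y := by
  rw [symmetrize_adj_iff]
  constructor
  · rintro (⟨_, _, h⟩ | ⟨h, _, _⟩ | ⟨h, _, _⟩)
    · exact h
    · exact absurd h hx
    · exact absurd h hy
  · intro h
    exact Or.inl ⟨hx, hy, h⟩

lemma sym_adj_cross {x y : Fin n} (hx : x ∈ A ∪ B) (hy : y ∉ A ∪ B) :
    (symmetrize G A B).Adj x y ↔ ∃ z ∈ B, G.Adj z y := by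
  rw [symmetrize_adj_iff]
  constructor
  · rintro (⟨h, _, _⟩ | ⟨_, _, h⟩ | ⟨_, h, _⟩)
    · exact absurd hx h
    · exact h
    · exact absurd hx h
  · intro h
    exact Or.inr (Or.inl ⟨hx, hy, h⟩)

lemma clone_adj (hB : IsCloneSet G B) {w y : Fin n} (hw : w ∈ B) :
    (∃ z ∈ B, G.Adj z y) ↔ G.Adj w y := by
  constructor
  · rintro ⟨z, hz, hzy⟩
    have h := hB.2 z hz w hw
    have : y ∈ G.neighborSet z := hzy
    rw [h] at this
    exact this
  · intro h
    exact ⟨w, hw, h⟩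

/-- Transfer a clique of `G` of the form `insert w S` (`w ∈ B`, `S` outside `A ∪ B`)
to a clique `insert u S` of `symmetrize G A B` for any `u ∈ A ∪ B`. -/
lemma clique_transfer₁ (hB : IsCloneSet G B) {w u : Fin n} {S : Finset (Fin n)}
    (hw : w ∈ B) (hu : u ∈ A ∪ B) (hS : ∀ x ∈ S, x ∉ A ∪ B)
    (hcl : G.IsClique (↑(insert w S) : Set (Fin n))) :
    (symmetrize G A B).IsClique (↑(insert u S) : Set (Fin n)) := by
  intro x hx y hy hxy
  simp only [Finset.coe_insert, Set.mem_insert_iff, Finset.mem_coe] at hx hy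
  have hwmem : (w : Fin n) ∈ (↑(insert w S) : Set (Fin n)) := by simp
  rcases hx with rfl | hxS
  · rcases hy with rfl | hyS
    · exact absurd rfl hxy
    · rw [sym_adj_cross hu (hS y hyS)]
      refine ⟨w, hw, ?_⟩
      have hyne : w ≠ y := fun h => (hS y hyS) (h ▸ Or.inr hw)
      exact hcl hwmem (by simp [hyS]) hyne
  · rcases hy with rfl | hyS
    · refine ((symmetrize G A B).adj_symm ?_)
      rw [sym_adj_cross hu (hS x hxS)]
      refine ⟨w, hw, ?_⟩
      have hxne : w ≠ x := fun h => (hS x hxS) (h ▸ Or.inr hw)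
      exact hcl hwmem (by simp [hxS]) hxne
    · rw [sym_adj_outside (hS x hxS) (hS y hyS)]
      exact hcl (by simp [hxS]) (by simp [hyS]) hxy

/-- Converse transfer: a clique `insert u S` of `symmetrize G A B` gives
a clique `insert w S` of `G` for `w ∈ B`. -/
lemma clique_transfer₂ (hB : IsCloneSet G B) {w u : Fin n} {S : Finset (Fin n)}
    (hw : w ∈ B) (hu : u ∈ A ∪ B) (hS : ∀ x ∈ S, x ∉ A ∪ B)
    (hcl : (symmetrize G A B).IsClique (↑(insert u S) : Set (Fin n))) :
    G.IsClique (↑(insert w S) : Set (Fin n)) := by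
  intro x hx y hy hxy
  simp only [Finset.coe_insert, Set.mem_insert_iff, Finset.mem_coe] at hx hy
  have humem : (u : Fin n) ∈ (↑(insert u S) : Set (Fin n)) := by simp
  have key : ∀ s ∈ S, G.Adj w s := by
    intro s hs
    have hus : u ≠ s := fun h => (hS s hs) (h ▸ hu)
    have := hcl humem (by simp [hs]) hus
    rw [sym_adj_cross hu (hS s hs)] at this
    exact (clone_adj hB hw).1 this
  rcases hx with rfl | hxS
  · rcases hy with rfl | hyS
    · exact absurd rfl hxy
    · exact key y hyS
  · rcases hy with rfl | hyS
    · exact (key x hxS).symm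
    · have := hcl (by simp [hxS]) (by simp [hyS]) hxy
      rw [sym_adj_outside (hS x hxS) (hS y hyS)] at this
      exact this

lemma clique_outside_iff {S : Finset (Fin n)} (hS : ∀ x ∈ S, x ∉ A ∪ B) :
    G.IsClique (↑S : Set (Fin n)) ↔ (symmetrize G A B).IsClique (↑S : Set (Fin n)) := by
  constructor <;> intro h x hx y hy hxy
  · rw [sym_adj_outside (hS x hx) (hS y hy)]
    exact h hx hy hxy
  · have := h hx hy hxy
    rwa [sym_adj_outside (hS x hx) (hS y hy)] at this

end AuxGraph
section AuxPart

variable {n : ℕ}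

/-- Mass placed on `B`-side cliques: for `K` with `K ∩ DU = {w}` for some `w ∈ D`,
the (1/N)-scaled total mass of `f` over all replacements of `w` by elements of `DU`. -/
noncomputable def part (DU D : Finset (Fin n)) (f : Finset (Fin n) → ℝ) :
    Finset (Fin n) → ℝ := fun K =>
  ∑ w ∈ D, if K ∩ DU = {w} then (DU.card : ℝ)⁻¹ * ∑ u ∈ DU, f (insert u (K.erase w)) else 0

lemma part_nonneg {DU D : Finset (Fin n)} {f : Finset (Fin n) → ℝ}
    (hf : ∀ K, 0 ≤ f K) (K : Finset (Fin n)) : 0 ≤ part DU D f K := by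
  refine Finset.sum_nonneg fun w _ => ?_
  split
  · exact mul_nonneg (by positivity) (Finset.sum_nonneg fun u _ => hf _)
  · exact le_refl 0

/-- Master computation of sums of `part` against a weight `ω`. -/
lemma part_calc (DU D : Finset (Fin n)) (hD : D ⊆ DU) (f ω : Finset (Fin n) → ℝ)
    (T : Finset (Fin n)) :
    ∑ K ∈ Finset.univ.filter (fun K => T ⊆ K), ω K * part DU D f K
      = (DU.card : ℝ)⁻¹ * ∑ w ∈ D, ∑ u ∈ DU,
          ∑ S ∈ Finset.univ.filter (fun S => T.erase w ⊆ S ∧ S ∩ DU = ∅),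
            ω (insert w S) * f (insert u S) := by
  classical
  have h1 : ∑ K ∈ Finset.univ.filter (fun K => T ⊆ K), ω K * part DU D f K
      = ∑ w ∈ D, ∑ K ∈ Finset.univ.filter (fun K => T ⊆ K),
          (if K ∩ DU = {w} then
            ω K * ((DU.card : ℝ)⁻¹ * ∑ u ∈ DU, f (insert u (K.erase w))) else 0) := by
    rw [Finset.sum_comm]
    refine Finset.sum_congr rfl fun K _ => ?_
    unfold part
    rw [Finset.mul_sum]
    refine Finset.sum_congr rfl fun w _ => ?_
    rw [mul_ite, mul_zero]
  rw [h1, Finset.mul_sum]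
  refine Finset.sum_congr rfl fun w hw => ?_
  rw [← Finset.sum_filter, Finset.filter_filter]
  rw [sum_reindex_insert DU (hD hw) T
    (fun K => ω K * ((DU.card : ℝ)⁻¹ * ∑ u ∈ DU, f (insert u (K.erase w))))]
  have h2 : ∑ S ∈ Finset.univ.filter (fun S => T.erase w ⊆ S ∧ S ∩ DU = ∅),
        ω (insert w S) * ((DU.card : ℝ)⁻¹ * ∑ u ∈ DU, f (insert u ((insert w S).erase w)))
      = ∑ S ∈ Finset.univ.filter (fun S => T.erase w ⊆ S ∧ S ∩ DU = ∅),
        (DU.card : ℝ)⁻¹ * ∑ u ∈ DU, ω (insert w S) * f (insert u S) := by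
    refine Finset.sum_congr rfl fun S hS => ?_
    simp only [Finset.mem_filter, Finset.mem_univ, true_and] at hS
    have hwS : w ∉ S := by
      intro hws
      have : w ∈ S ∩ DU := Finset.mem_inter.2 ⟨hws, hD hw⟩
      rw [hS.2] at this
      exact absurd this (Finset.notMem_empty w)
    rw [Finset.erase_insert hwS, Finset.mul_sum, Finset.mul_sum, Finset.mul_sum]
    refine Finset.sum_congr rfl fun u _ => ?_
    ring
  rw [h2, ← Finset.mul_sum, Finset.sum_comm]

end AuxPart
section AuxSide

variable {n : ℕ} {G : SimpleGraph (Fin n)} {A B : Set (Fin n)} {t : ℕ}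

/-- A fractional cover of the symmetrized graph vanishes on sets meeting `A ∪ B` twice. -/
lemma cover_zero_two {DU : Finset (Fin n)} (hDU : ∀ x, x ∈ DU ↔ x ∈ A ∪ B)
    {f : Finset (Fin n) → ℝ} (hf : IsFracCover t (symmetrize G A B) f)
    (K : Finset (Fin n)) (h2 : 1 < (K ∩ DU).card) : f K = 0 := by
  obtain ⟨x, hx, y, hy, hxy⟩ := Finset.one_lt_card.1 h2
  simp only [Finset.mem_inter] at hx hy
  refine hf.2.1 K ?_
  rintro ⟨-, hcl⟩
  exact sym_not_adj ((hDU x).1 hx.2) ((hDU y).1 hy.2)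
    (hcl (Finset.mem_coe.2 hx.1) (Finset.mem_coe.2 hy.1) hxy)

lemma part_vanish (hB : IsCloneSet G B) {DU D : Finset (Fin n)}
    (hDU : ∀ x, x ∈ DU ↔ x ∈ A ∪ B) (hDB : ∀ w ∈ D, w ∈ B)
    {f : Finset (Fin n) → ℝ} (hf : IsFracCover t (symmetrize G A B) f)
    (K : Finset (Fin n)) (hK : ¬ IsCliqueOf G K) : part DU D f K = 0 := by
  unfold part
  refine Finset.sum_eq_zero fun w hw => ?_
  split
  case isFalse => rfl
  case isTrue h =>
    have hwK : w ∈ K := by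
      have : w ∈ K ∩ DU := by rw [h]; exact Finset.mem_singleton_self w
      exact (Finset.mem_inter.1 this).1
    have hS : ∀ x ∈ K.erase w, x ∉ A ∪ B := by
      intro x hx hxAB
      have hxw := Finset.ne_of_mem_erase hx
      have : x ∈ K ∩ DU :=
        Finset.mem_inter.2 ⟨Finset.mem_of_mem_erase hx, (hDU x).2 hxAB⟩
      rw [h] at this
      exact hxw (Finset.mem_singleton.1 this)
    have hzero : ∀ u ∈ DU, f (insert u (K.erase w)) = 0 := by
      intro u hu
      refine hf.2.1 _ ?_
      rintro ⟨-, hcl⟩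
      refine hK ⟨⟨w, hwK⟩, ?_⟩
      have := clique_transfer₂ hB (hDB w hw) ((hDU u).1 hu) hS hcl
      rwa [Finset.insert_erase hwK] at this
    rw [Finset.sum_congr rfl hzero]
    simp

/-- Per-replacement coverage: if `T` is a `t`-clique of `G` meeting `DU` exactly in
`{w}` with `w ∈ B`, then for each `u ∈ DU` the `f`-mass over supersets (with `w`
replaced by `u`) is at least 1. -/
lemma side_cover_one (hB : IsCloneSet G B) (ht : 1 ≤ t) {DU : Finset (Fin n)}
    (hDU : ∀ x, x ∈ DU ↔ x ∈ A ∪ B)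
    {f : Finset (Fin n) → ℝ} (hf : IsFracCover t (symmetrize G A B) f)
    {T : Finset (Fin n)} {w u : Fin n} (hw : w ∈ B) (hu : u ∈ DU)
    (hT : T.card = t) (hTcl : G.IsClique (↑T : Set (Fin n))) (hTw : T ∩ DU = {w}) :
    1 ≤ ∑ S ∈ Finset.univ.filter (fun S => T.erase w ⊆ S ∧ S ∩ DU = ∅),
          f (insert u S) := by
  classical
  have hwT : w ∈ T := by
    have : w ∈ T ∩ DU := by rw [hTw]; exact Finset.mem_singleton_self w
    exact (Finset.mem_inter.1 this).1
  have hS : ∀ x ∈ T.erase w, x ∉ A ∪ B := by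
    intro x hx hxAB
    have hxw := Finset.ne_of_mem_erase hx
    have : x ∈ T ∩ DU :=
      Finset.mem_inter.2 ⟨Finset.mem_of_mem_erase hx, (hDU x).2 hxAB⟩
    rw [hTw] at this
    exact hxw (Finset.mem_singleton.1 this)
  have huTe : u ∉ T.erase w := fun h => hS u h ((hDU u).1 hu)
  set Tu : Finset (Fin n) := insert u (T.erase w) with hTu
  have hTucard : Tu.card = t := by
    rw [hTu, Finset.card_insert_of_notMem huTe, Finset.card_erase_of_mem hwT, hT]
    omega
  have hTucl : (symmetrize G A B).IsClique (↑Tu : Set (Fin n)) := by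
    refine clique_transfer₁ hB hw ((hDU u).1 hu) hS ?_
    rwa [Finset.insert_erase hwT]
  have hcov := hf.2.2 Tu hTucard hTucl
  -- partition the covering sum
  have hzero2 := cover_zero_two (t := t) hDU hf
  rw [sum_partition DU Tu f hzero2] at hcov
  have hempty : ∑ K ∈ Finset.univ.filter (fun K => Tu ⊆ K ∧ K ∩ DU = ∅), f K = 0 := by
    refine Finset.sum_eq_zero fun K hK => ?_
    simp only [Finset.mem_filter, Finset.mem_univ, true_and] at hK
    exfalso
    have huK : u ∈ K := hK.1 (Finset.mem_insert_self u _)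
    have : u ∈ K ∩ DU := Finset.mem_inter.2 ⟨huK, hu⟩
    rw [hK.2] at this
    exact absurd this (Finset.notMem_empty u)
  have hsingle : ∑ u' ∈ DU, ∑ K ∈ Finset.univ.filter (fun K => Tu ⊆ K ∧ K ∩ DU = {u'}), f K
      = ∑ K ∈ Finset.univ.filter (fun K => Tu ⊆ K ∧ K ∩ DU = {u}), f K := by
    refine Finset.sum_eq_single_of_mem u hu fun u' _ hu' => ?_
    refine Finset.sum_eq_zero fun K hK => ?_
    simp only [Finset.mem_filter, Finset.mem_univ, true_and] at hK
    exfalso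
    have huK : u ∈ K := hK.1 (Finset.mem_insert_self u _)
    have : u ∈ K ∩ DU := Finset.mem_inter.2 ⟨huK, hu⟩
    rw [hK.2] at this
    exact hu' (Finset.mem_singleton.1 this).symm
  rw [hempty, hsingle, zero_add] at hcov
  rw [sum_reindex_insert DU hu Tu f] at hcov
  rwa [hTu, Finset.erase_insert huTe] at hcov

/-- Coverage for `t`-cliques avoiding `A ∪ B`. -/
lemma side_cover_outside {DU : Finset (Fin n)} (hDU : ∀ x, x ∈ DU ↔ x ∈ A ∪ B)
    {f : Finset (Fin n) → ℝ} (hf : IsFracCover t (symmetrize G A B) f)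
    {T : Finset (Fin n)} (hT : T.card = t) (hTcl : G.IsClique (↑T : Set (Fin n)))
    (hTout : T ∩ DU = ∅) :
    1 ≤ (∑ K ∈ Finset.univ.filter (fun K => T ⊆ K ∧ K ∩ DU = ∅), f K)
        + ∑ u ∈ DU, ∑ S ∈ Finset.univ.filter (fun S => T ⊆ S ∧ S ∩ DU = ∅),
            f (insert u S) := by
  classical
  have hS : ∀ x ∈ T, x ∉ A ∪ B := by
    intro x hx hxAB
    have : x ∈ T ∩ DU := Finset.mem_inter.2 ⟨hx, (hDU x).2 hxAB⟩
    rw [hTout] at this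
    exact absurd this (Finset.notMem_empty x)
  have hTcl' : (symmetrize G A B).IsClique (↑T : Set (Fin n)) :=
    (clique_outside_iff hS).1 hTcl
  have hcov := hf.2.2 T hT hTcl'
  have hzero2 := cover_zero_two (t := t) hDU hf
  rw [sum_partition DU T f hzero2] at hcov
  have hre : ∀ u ∈ DU,
      ∑ K ∈ Finset.univ.filter (fun K => T ⊆ K ∧ K ∩ DU = {u}), f K
        = ∑ S ∈ Finset.univ.filter (fun S => T ⊆ S ∧ S ∩ DU = ∅), f (insert u S) := by
    intro u hu
    rw [sum_reindex_insert DU hu T f]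
    have hTe : T.erase u = T := Finset.erase_eq_of_notMem fun huT => hS u huT ((hDU u).1 hu)
    rw [hTe]
  rwa [Finset.sum_congr rfl hre] at hcov

end AuxSide
section AuxCost

variable {n : ℕ}

lemma part_sum_one (DU D : Finset (Fin n)) (hD : D ⊆ DU) (f : Finset (Fin n) → ℝ)
    (T : Finset (Fin n)) :
    ∑ K ∈ Finset.univ.filter (fun K => T ⊆ K), part DU D f K
      = (DU.card : ℝ)⁻¹ * ∑ w ∈ D, ∑ u ∈ DU,
          ∑ S ∈ Finset.univ.filter (fun S => T.erase w ⊆ S ∧ S ∩ DU = ∅),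
            f (insert u S) := by
  have := part_calc DU D hD f (fun _ => 1) T
  simpa using this

lemma part_cost (c : ℕ → ℝ) (DU D : Finset (Fin n)) (hD : D ⊆ DU)
    (f : Finset (Fin n) → ℝ) :
    ∑ K ∈ Finset.univ.filter (fun K => (∅ : Finset (Fin n)) ⊆ K),
        c K.card * part DU D f K
      = (D.card : ℝ) * (DU.card : ℝ)⁻¹ * ∑ u ∈ DU,
          ∑ K ∈ Finset.univ.filter
            (fun K => (∅ : Finset (Fin n)) ⊆ K ∧ K ∩ DU = {u}), c K.card * f K := by
  classical
  rw [part_calc DU D hD f (fun K => c K.card) ∅]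
  have hinner : ∀ w ∈ D, ∑ u ∈ DU,
      ∑ S ∈ Finset.univ.filter (fun S => (∅ : Finset (Fin n)).erase w ⊆ S ∧ S ∩ DU = ∅),
        c (insert w S).card * f (insert u S)
      = ∑ u ∈ DU, ∑ K ∈ Finset.univ.filter
          (fun K => (∅ : Finset (Fin n)) ⊆ K ∧ K ∩ DU = {u}), c K.card * f K := by
    intro w hw
    refine Finset.sum_congr rfl fun u hu => ?_
    rw [sum_reindex_insert DU hu ∅ (fun K => c K.card * f K)]
    refine Finset.sum_congr (by rw [Finset.erase_empty, Finset.erase_empty]) fun S hS => ?_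
    simp only [Finset.mem_filter, Finset.mem_univ, true_and] at hS
    have hnot : ∀ x ∈ DU, x ∉ S := by
      intro x hx hxS
      have : x ∈ S ∩ DU := Finset.mem_inter.2 ⟨hxS, hx⟩
      rw [hS.2] at this
      exact absurd this (Finset.notMem_empty x)
    rw [Finset.card_insert_of_notMem (hnot w (hD hw)),
      Finset.card_insert_of_notMem (hnot u hu)]
  rw [Finset.sum_congr rfl hinner, Finset.sum_const, nsmul_eq_mul]
  ring

lemma cost_nonneg {t : ℕ} {c : ℕ → ℝ} (hc : ∀ i, 1 ≤ i → 0 ≤ c i)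
    {H : SimpleGraph (Fin n)} {f : Finset (Fin n) → ℝ} (hf : IsFracCover t H f) :
    0 ≤ cliqueCost c f := by
  refine Finset.sum_nonneg fun K _ => ?_
  by_cases h : f K = 0
  · rw [h, mul_zero]
  · have hcl : IsCliqueOf H K := by
      by_contra hn
      exact h (hf.2.1 K hn)
    exact mul_nonneg (hc K.card (Finset.card_pos.2 hcl.1)) (hf.1 K)

lemma theta_set_nonempty {t : ℕ} (ht : 1 ≤ t) (c : ℕ → ℝ) (H : SimpleGraph (Fin n)) :
    {x | ∃ f, IsFracCover t H f ∧ x = cliqueCost c f}.Nonempty := by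
  classical
  refine ⟨cliqueCost c (fun K => if IsCliqueOf H K then 1 else 0),
    fun K => if IsCliqueOf H K then 1 else 0, ⟨?_, ?_, ?_⟩, rfl⟩
  · intro K
    dsimp only
    split <;> norm_num
  · intro K hK
    dsimp only
    rw [if_neg hK]
  · intro T hTcard hTcl
    have hTne : T.Nonempty := Finset.card_pos.1 (by omega)
    have hmem : T ∈ Finset.univ.filter (fun K : Finset (Fin n) => T ⊆ K) := by
      simp
    have := Finset.single_le_sum
      (f := fun K : Finset (Fin n) => if IsCliqueOf H K then (1 : ℝ) else 0)
      (fun K _ => by split <;> norm_num) hmem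
    dsimp only at this ⊢
    rwa [if_pos ⟨hTne, hTcl⟩] at this

lemma theta_bddBelow {t : ℕ} {c : ℕ → ℝ} (hc : ∀ i, 1 ≤ i → 0 ≤ c i)
    (H : SimpleGraph (Fin n)) :
    BddBelow {x | ∃ f, IsFracCover t H f ∧ x = cliqueCost c f} := by
  refine ⟨0, fun x hx => ?_⟩
  obtain ⟨f, hf, rfl⟩ := hx
  exact cost_nonneg hc hf

end AuxCost
section KeyLemma

lemma key_bound (t : ℕ) (ht : 1 ≤ t) (c : ℕ → ℝ) (hc : ∀ i, 1 ≤ i → 0 ≤ c i)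
    (n : ℕ) (G : SimpleGraph (Fin n)) (V₀ V₁ : Set (Fin n))
    (h₀ : IsCloneSet G V₀) (h₁ : IsCloneSet G V₁) (hdisj : Disjoint V₀ V₁)
    (hind : ∀ u ∈ V₀ ∪ V₁, ∀ v ∈ V₀ ∪ V₁, ¬ G.Adj u v)
    (f₀ f₁ : Finset (Fin n) → ℝ)
    (hf₀ : IsFracCover t (symmetrize G V₀ V₁) f₀)
    (hf₁ : IsFracCover t (symmetrize G V₁ V₀) f₁) :
    thetaFrac t G c ≤ max (cliqueCost c f₀) (cliqueCost c f₁) := by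
  classical
  set DU : Finset (Fin n) := Finset.univ.filter (fun x => x ∈ V₀ ∪ V₁) with hDUdef
  set D0 : Finset (Fin n) := Finset.univ.filter (fun x => x ∈ V₀) with hD0def
  set D1 : Finset (Fin n) := Finset.univ.filter (fun x => x ∈ V₁) with hD1def
  have hDU : ∀ x, x ∈ DU ↔ x ∈ V₀ ∪ V₁ := fun x => by simp [hDUdef]
  have hDU' : ∀ x, x ∈ DU ↔ x ∈ V₁ ∪ V₀ := fun x => by
    rw [hDU x, Set.union_comm]
  have hD0 : ∀ x, x ∈ D0 ↔ x ∈ V₀ := fun x => by simp [hD0def]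
  have hD1 : ∀ x, x ∈ D1 ↔ x ∈ V₁ := fun x => by simp [hD1def]
  have hD0sub : D0 ⊆ DU := fun x hx => (hDU x).2 (Or.inl ((hD0 x).1 hx))
  have hD1sub : D1 ⊆ DU := fun x hx => (hDU x).2 (Or.inr ((hD1 x).1 hx))
  have hdisjD : Disjoint D0 D1 := by
    rw [Finset.disjoint_left]
    intro x hx0 hx1
    exact (Set.disjoint_left.1 hdisj) ((hD0 x).1 hx0) ((hD1 x).1 hx1)
  have hDUeq : DU = D0 ∪ D1 := by
    ext x
    simp [hDUdef, hD0def, hD1def, Set.mem_union]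
  have hcardDU : DU.card = D0.card + D1.card := by
    rw [hDUeq, Finset.card_union_of_disjoint hdisjD]
  have hDUpos : 0 < DU.card := by
    obtain ⟨x, hx⟩ := h₀.1
    exact Finset.card_pos.2 ⟨x, (hDU x).2 (Or.inl hx)⟩
  have hNpos : (0 : ℝ) < (DU.card : ℝ) := by exact_mod_cast hDUpos
  set lam : ℝ := (D1.card : ℝ) * (DU.card : ℝ)⁻¹ with hlamdef
  set mu : ℝ := (D0.card : ℝ) * (DU.card : ℝ)⁻¹ with hmudef
  have hlam0 : 0 ≤ lam := by positivity
  have hmu0 : 0 ≤ mu := by positivity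
  have hlammu : lam + mu = 1 := by
    rw [hlamdef, hmudef, ← add_mul,
      show ((D1.card : ℝ) + D0.card) = (DU.card : ℝ) by rw [hcardDU]; push_cast; ring]
    exact mul_inv_cancel₀ (ne_of_gt hNpos)
  have hD1B : ∀ w ∈ D1, w ∈ V₁ := fun w hw => (hD1 w).1 hw
  have hD0B : ∀ w ∈ D0, w ∈ V₀ := fun w hw => (hD0 w).1 hw
  set h : Finset (Fin n) → ℝ := fun K =>
    (if K ∩ DU = ∅ then lam * f₀ K + mu * f₁ K else 0)
      + part DU D1 f₀ K + part DU D0 f₁ K with hhdef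
  -- h is a fractional cover of G
  have hcov : IsFracCover t G h := by
    refine ⟨?_, ?_, ?_⟩
    · -- nonnegativity
      intro K
      simp only [hhdef]
      refine add_nonneg (add_nonneg ?_ (part_nonneg hf₀.1 K)) (part_nonneg hf₁.1 K)
      split
      · exact add_nonneg (mul_nonneg hlam0 (hf₀.1 K)) (mul_nonneg hmu0 (hf₁.1 K))
      · exact le_refl 0
    · -- vanishing on non-cliques of G
      intro K hK
      simp only [hhdef]
      rw [part_vanish h₁ hDU hD1B hf₀ K hK, part_vanish h₀ hDU' hD0B hf₁ K hK,
        add_zero, add_zero]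
      split
      case isTrue hKE =>
        have hSK : ∀ x ∈ K, x ∉ V₀ ∪ V₁ := by
          intro x hx hxU
          have hmem : x ∈ K ∩ DU := Finset.mem_inter.2 ⟨hx, (hDU x).2 hxU⟩
          rw [hKE] at hmem
          exact absurd hmem (Finset.notMem_empty x)
        have hf₀0 : f₀ K = 0 := by
          refine hf₀.2.1 K ?_
          rintro ⟨hne, hcl⟩
          exact hK ⟨hne, (clique_outside_iff hSK).2 hcl⟩
        have hSK' : ∀ x ∈ K, x ∉ V₁ ∪ V₀ := by
          intro x hx
          rw [Set.union_comm]
          exact hSK x hx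
        have hf₁0 : f₁ K = 0 := by
          refine hf₁.2.1 K ?_
          rintro ⟨hne, hcl⟩
          exact hK ⟨hne, (clique_outside_iff hSK').2 hcl⟩
        rw [hf₀0, hf₁0]
        ring
      case isFalse => rfl
    · -- coverage
      intro T hTcard hTcl
      have hTle : (T ∩ DU).card ≤ 1 := by
        by_contra hgt
        push_neg at hgt
        obtain ⟨x, hx, y, hy, hxy⟩ := Finset.one_lt_card.1 hgt
        simp only [Finset.mem_inter] at hx hy
        exact hind x ((hDU x).1 hx.2) y ((hDU y).1 hy.2)
          (hTcl (Finset.mem_coe.2 hx.1) (Finset.mem_coe.2 hy.1) hxy)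
      by_cases hTE : T ∩ DU = ∅
      · -- case: T avoids V₀ ∪ V₁
        have hsplit : ∑ K ∈ Finset.univ.filter (fun K => T ⊆ K), h K
            = (∑ K ∈ Finset.univ.filter (fun K => T ⊆ K),
                (if K ∩ DU = ∅ then lam * f₀ K + mu * f₁ K else 0))
              + (∑ K ∈ Finset.univ.filter (fun K => T ⊆ K), part DU D1 f₀ K)
              + (∑ K ∈ Finset.univ.filter (fun K => T ⊆ K), part DU D0 f₁ K) := by
          simp only [hhdef]
          rw [Finset.sum_add_distrib, Finset.sum_add_distrib]
        have ht1 : ∑ K ∈ Finset.univ.filter (fun K => T ⊆ K),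
              (if K ∩ DU = ∅ then lam * f₀ K + mu * f₁ K else 0)
            = lam * (∑ K ∈ Finset.univ.filter (fun K => T ⊆ K ∧ K ∩ DU = ∅), f₀ K)
              + mu * (∑ K ∈ Finset.univ.filter (fun K => T ⊆ K ∧ K ∩ DU = ∅), f₁ K) := by
          rw [← Finset.sum_filter, Finset.filter_filter, Finset.sum_add_distrib,
            ← Finset.mul_sum, ← Finset.mul_sum]
        have hp : ∀ (D : Finset (Fin n)), D ⊆ DU → ∀ f : Finset (Fin n) → ℝ,
            ∑ K ∈ Finset.univ.filter (fun K => T ⊆ K), part DU D f K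
              = (D.card : ℝ) * (DU.card : ℝ)⁻¹ *
                ∑ u ∈ DU, ∑ S ∈ Finset.univ.filter (fun S => T ⊆ S ∧ S ∩ DU = ∅),
                  f (insert u S) := by
          intro D hD f
          rw [part_sum_one DU D hD f T]
          have herase : ∀ w ∈ D,
              (∑ u ∈ DU, ∑ S ∈ Finset.univ.filter
                  (fun S => T.erase w ⊆ S ∧ S ∩ DU = ∅), f (insert u S))
                = ∑ u ∈ DU, ∑ S ∈ Finset.univ.filter
                  (fun S => T ⊆ S ∧ S ∩ DU = ∅), f (insert u S) := by
            intro w hw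
            have hwT : w ∉ T := by
              intro hwT
              have hmem : w ∈ T ∩ DU := Finset.mem_inter.2 ⟨hwT, hD hw⟩
              rw [hTE] at hmem
              exact absurd hmem (Finset.notMem_empty w)
            rw [Finset.erase_eq_of_notMem hwT]
          rw [Finset.sum_congr rfl herase, Finset.sum_const, nsmul_eq_mul]
          ring
        have hc₀ := side_cover_outside hDU hf₀ hTcard hTcl hTE
        have hc₁ := side_cover_outside hDU' hf₁ hTcard hTcl hTE
        have key1 : ∑ K ∈ Finset.univ.filter (fun K => T ⊆ K), h K
            = lam * ((∑ K ∈ Finset.univ.filter (fun K => T ⊆ K ∧ K ∩ DU = ∅), f₀ K)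
                + ∑ u ∈ DU, ∑ S ∈ Finset.univ.filter
                    (fun S => T ⊆ S ∧ S ∩ DU = ∅), f₀ (insert u S))
              + mu * ((∑ K ∈ Finset.univ.filter (fun K => T ⊆ K ∧ K ∩ DU = ∅), f₁ K)
                + ∑ u ∈ DU, ∑ S ∈ Finset.univ.filter
                    (fun S => T ⊆ S ∧ S ∩ DU = ∅), f₁ (insert u S)) := by
          rw [hsplit, ht1, hp D1 hD1sub f₀, hp D0 hD0sub f₁, hlamdef, hmudef]
          ring
        rw [key1]
        calc (1 : ℝ) = lam * 1 + mu * 1 := by rw [mul_one, mul_one, hlammu]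
          _ ≤ _ := add_le_add (mul_le_mul_of_nonneg_left hc₀ hlam0)
              (mul_le_mul_of_nonneg_left hc₁ hmu0)
      · -- case: T meets V₀ ∪ V₁ in exactly one vertex w
        have hTone : (T ∩ DU).card = 1 := by
          have hne : (T ∩ DU).card ≠ 0 := fun hz => hTE (Finset.card_eq_zero.1 hz)
          omega
        obtain ⟨w, hw⟩ := Finset.card_eq_one.1 hTone
        have hwDU : w ∈ DU := by
          have hmem : w ∈ T ∩ DU := by rw [hw]; exact Finset.mem_singleton_self w
          exact (Finset.mem_inter.1 hmem).2
        have hwU : w ∈ V₀ ∪ V₁ := (hDU w).1 hwDU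
        rcases hwU with hwV0 | hwV1
        · -- w ∈ V₀ : use the f₁ part
          have hhge : ∀ K, part DU D0 f₁ K ≤ h K := by
            intro K
            simp only [hhdef]
            have t1 : (0:ℝ) ≤ if K ∩ DU = ∅ then lam * f₀ K + mu * f₁ K else 0 := by
              split
              · exact add_nonneg (mul_nonneg hlam0 (hf₀.1 K)) (mul_nonneg hmu0 (hf₁.1 K))
              · exact le_refl 0
            have t2 : 0 ≤ part DU D1 f₀ K := part_nonneg hf₀.1 K
            linarith
          refine le_trans ?_ (Finset.sum_le_sum (fun K _ => hhge K))
          rw [part_sum_one DU D0 hD0sub f₁ T]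
          have hwD0 : w ∈ D0 := (hD0 w).2 hwV0
          have hgnn : ∀ w' ∈ D0, (0:ℝ) ≤ ∑ u ∈ DU, ∑ S ∈ Finset.univ.filter
              (fun S => T.erase w' ⊆ S ∧ S ∩ DU = ∅), f₁ (insert u S) :=
            fun w' _ => Finset.sum_nonneg fun u _ =>
              Finset.sum_nonneg fun S _ => hf₁.1 _
          have hsingle := Finset.single_le_sum hgnn hwD0
          have hone : ∀ u ∈ DU, (1:ℝ) ≤ ∑ S ∈ Finset.univ.filter
              (fun S => T.erase w ⊆ S ∧ S ∩ DU = ∅), f₁ (insert u S) :=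
            fun u hu => side_cover_one h₀ ht hDU' hf₁ hwV0 hu hTcard hTcl hw
          have hNle : (DU.card : ℝ) ≤ ∑ u ∈ DU, ∑ S ∈ Finset.univ.filter
              (fun S => T.erase w ⊆ S ∧ S ∩ DU = ∅), f₁ (insert u S) := by
            calc (DU.card : ℝ) = ∑ _u ∈ DU, (1:ℝ) := by simp
              _ ≤ _ := Finset.sum_le_sum hone
          calc (1:ℝ) = (DU.card : ℝ)⁻¹ * (DU.card : ℝ) :=
                (inv_mul_cancel₀ (ne_of_gt hNpos)).symm
            _ ≤ _ := mul_le_mul_of_nonneg_left (le_trans hNle hsingle)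
                (le_of_lt (inv_pos.2 hNpos))
        · -- w ∈ V₁ : use the f₀ part
          have hhge : ∀ K, part DU D1 f₀ K ≤ h K := by
            intro K
            simp only [hhdef]
            have t1 : (0:ℝ) ≤ if K ∩ DU = ∅ then lam * f₀ K + mu * f₁ K else 0 := by
              split
              · exact add_nonneg (mul_nonneg hlam0 (hf₀.1 K)) (mul_nonneg hmu0 (hf₁.1 K))
              · exact le_refl 0
            have t2 : 0 ≤ part DU D0 f₁ K := part_nonneg hf₁.1 K
            linarith
          refine le_trans ?_ (Finset.sum_le_sum (fun K _ => hhge K))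
          rw [part_sum_one DU D1 hD1sub f₀ T]
          have hwD1 : w ∈ D1 := (hD1 w).2 hwV1
          have hgnn : ∀ w' ∈ D1, (0:ℝ) ≤ ∑ u ∈ DU, ∑ S ∈ Finset.univ.filter
              (fun S => T.erase w' ⊆ S ∧ S ∩ DU = ∅), f₀ (insert u S) :=
            fun w' _ => Finset.sum_nonneg fun u _ =>
              Finset.sum_nonneg fun S _ => hf₀.1 _
          have hsingle := Finset.single_le_sum hgnn hwD1
          have hone : ∀ u ∈ DU, (1:ℝ) ≤ ∑ S ∈ Finset.univ.filter
              (fun S => T.erase w ⊆ S ∧ S ∩ DU = ∅), f₀ (insert u S) :=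
            fun u hu => side_cover_one h₁ ht hDU hf₀ hwV1 hu hTcard hTcl hw
          have hNle : (DU.card : ℝ) ≤ ∑ u ∈ DU, ∑ S ∈ Finset.univ.filter
              (fun S => T.erase w ⊆ S ∧ S ∩ DU = ∅), f₀ (insert u S) := by
            calc (DU.card : ℝ) = ∑ _u ∈ DU, (1:ℝ) := by simp
              _ ≤ _ := Finset.sum_le_sum hone
          calc (1:ℝ) = (DU.card : ℝ)⁻¹ * (DU.card : ℝ) :=
                (inv_mul_cancel₀ (ne_of_gt hNpos)).symm
            _ ≤ _ := mul_le_mul_of_nonneg_left (le_trans hNle hsingle)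
                (le_of_lt (inv_pos.2 hNpos))
  -- cost of h
  have huniv : Finset.univ.filter (fun K : Finset (Fin n) => (∅ : Finset (Fin n)) ⊆ K)
      = Finset.univ := by
    apply Finset.filter_true_of_mem
    intro K _
    exact Finset.empty_subset K
  have hcost : cliqueCost c h = lam * cliqueCost c f₀ + mu * cliqueCost c f₁ := by
    have hz₀ : ∀ K : Finset (Fin n), 1 < (K ∩ DU).card → c K.card * f₀ K = 0 :=
      fun K hK => by rw [cover_zero_two hDU hf₀ K hK, mul_zero]
    have hz₁ : ∀ K : Finset (Fin n), 1 < (K ∩ DU).card → c K.card * f₁ K = 0 :=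
      fun K hK => by rw [cover_zero_two hDU' hf₁ K hK, mul_zero]
    have hdec₀ := sum_partition DU ∅ (fun K => c K.card * f₀ K) hz₀
    have hdec₁ := sum_partition DU ∅ (fun K => c K.card * f₁ K) hz₁
    have hcost₀ : cliqueCost c f₀
        = (∑ K ∈ Finset.univ.filter (fun K => (∅ : Finset (Fin n)) ⊆ K ∧ K ∩ DU = ∅),
            c K.card * f₀ K)
          + ∑ u ∈ DU, ∑ K ∈ Finset.univ.filter
              (fun K => (∅ : Finset (Fin n)) ⊆ K ∧ K ∩ DU = {u}), c K.card * f₀ K := by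
      unfold cliqueCost
      conv_lhs => rw [← huniv]
      exact hdec₀
    have hcost₁ : cliqueCost c f₁
        = (∑ K ∈ Finset.univ.filter (fun K => (∅ : Finset (Fin n)) ⊆ K ∧ K ∩ DU = ∅),
            c K.card * f₁ K)
          + ∑ u ∈ DU, ∑ K ∈ Finset.univ.filter
              (fun K => (∅ : Finset (Fin n)) ⊆ K ∧ K ∩ DU = {u}), c K.card * f₁ K := by
      unfold cliqueCost
      conv_lhs => rw [← huniv]
      exact hdec₁
    have hsplit : cliqueCost c h
        = (∑ K ∈ Finset.univ.filter (fun K : Finset (Fin n) => (∅ : Finset (Fin n)) ⊆ K),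
            c K.card * (if K ∩ DU = ∅ then lam * f₀ K + mu * f₁ K else 0))
          + (∑ K ∈ Finset.univ.filter (fun K : Finset (Fin n) => (∅ : Finset (Fin n)) ⊆ K),
              c K.card * part DU D1 f₀ K)
          + (∑ K ∈ Finset.univ.filter (fun K : Finset (Fin n) => (∅ : Finset (Fin n)) ⊆ K),
              c K.card * part DU D0 f₁ K) := by
      unfold cliqueCost
      conv_lhs => rw [← huniv]
      simp only [hhdef]
      rw [← Finset.sum_add_distrib, ← Finset.sum_add_distrib]
      refine Finset.sum_congr rfl fun K _ => ?_
      ring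
    have ht1 : ∑ K ∈ Finset.univ.filter (fun K : Finset (Fin n) => (∅ : Finset (Fin n)) ⊆ K),
          c K.card * (if K ∩ DU = ∅ then lam * f₀ K + mu * f₁ K else 0)
        = lam * (∑ K ∈ Finset.univ.filter
              (fun K => (∅ : Finset (Fin n)) ⊆ K ∧ K ∩ DU = ∅), c K.card * f₀ K)
          + mu * (∑ K ∈ Finset.univ.filter
              (fun K => (∅ : Finset (Fin n)) ⊆ K ∧ K ∩ DU = ∅), c K.card * f₁ K) := by
      simp only [mul_ite, mul_zero]
      rw [← Finset.sum_filter, Finset.filter_filter]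
      rw [Finset.mul_sum, Finset.mul_sum, ← Finset.sum_add_distrib]
      refine Finset.sum_congr rfl fun K _ => ?_
      ring
    rw [hsplit, ht1, part_cost c DU D1 hD1sub f₀, part_cost c DU D0 hD0sub f₁,
      hcost₀, hcost₁, hlamdef, hmudef]
    ring
  -- conclude
  have hθ : thetaFrac t G c ≤ cliqueCost c h := by
    unfold thetaFrac
    exact csInf_le (theta_bddBelow hc G) ⟨h, hcov, rfl⟩
  refine le_trans hθ ?_
  rw [hcost]
  calc lam * cliqueCost c f₀ + mu * cliqueCost c f₁
      ≤ lam * max (cliqueCost c f₀) (cliqueCost c f₁)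
        + mu * max (cliqueCost c f₀) (cliqueCost c f₁) :=
        add_le_add (mul_le_mul_of_nonneg_left (le_max_left _ _) hlam0)
          (mul_le_mul_of_nonneg_left (le_max_right _ _) hmu0)
    _ = max (cliqueCost c f₀) (cliqueCost c f₁) := by rw [← add_mul, hlammu, one_mul]

end KeyLemma
/-- Lemma 2.1 (cover part): symmetrizing one clone class onto the other does
not decrease the fractional `t`-clique cover number, for at least one of the
two directions. -/
theorem stmt8 (t : ℕ) (ht : 1 ≤ t) (c : ℕ → ℝ) (hc : ∀ i, 1 ≤ i → 0 ≤ c i)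
    (n : ℕ) (G : SimpleGraph (Fin n)) (V₀ V₁ : Set (Fin n))
    (h₀ : IsCloneSet G V₀) (h₁ : IsCloneSet G V₁) (hdisj : Disjoint V₀ V₁)
    (hind : ∀ u ∈ V₀ ∪ V₁, ∀ v ∈ V₀ ∪ V₁, ¬ G.Adj u v) :
    thetaFrac t G c ≤
      max (thetaFrac t (symmetrize G V₀ V₁) c) (thetaFrac t (symmetrize G V₁ V₀) c) := by
  classical
  refine le_of_forall_pos_le_add fun ε hε => ?_
  obtain ⟨x₀, hx₀mem, hx₀lt⟩ :=
    Real.lt_sInf_add_pos (theta_set_nonempty ht c (symmetrize G V₀ V₁)) hε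
  obtain ⟨x₁, hx₁mem, hx₁lt⟩ :=
    Real.lt_sInf_add_pos (theta_set_nonempty ht c (symmetrize G V₁ V₀)) hε
  obtain ⟨f₀, hf₀, rfl⟩ := hx₀mem
  obtain ⟨f₁, hf₁, rfl⟩ := hx₁mem
  have hkey := key_bound t ht c hc n G V₀ V₁ h₀ h₁ hdisj hind f₀ f₁ hf₀ hf₁
  refine le_trans hkey (le_trans (max_le_max (le_of_lt hx₀lt) (le_of_lt hx₁lt)) ?_)
  rw [max_add_add_right]
  unfold thetaFrac
  exact le_refl _
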